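/- Let B be a biquandle and define the map S̄ : B × B → B × B by S̄(a,b) = (b^{ā}, a_{b̄}). Then S̄ satisfies the set-theoretic Yang–Baxter equation: (S̄ × Id) ∘ (Id × S̄) ∘ (S̄ × Id) = (Id × S̄) ∘ (S̄ × Id) ∘ (Id × S̄) as maps B × B × B → B × B × B. -/
import Mathlib


/-- A set with four binary operations: `ur a b = a^b` (upper right),
`ul a b = a^{b̄}` (upper left), `lr a b = a_b` (lower right),
`ll a b = a_{b̄}` (lower left). -/
structure BiquandleOps (B : Type*) where
  ur : B → B → B
  ul : B → B → B
  lr : B → B → B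
  ll : B → B → B

/-- The Kauffman–Radford biquandle axioms (1)–(4). -/
def IsBiquandle {B : Type*} (Q : BiquandleOps B) : Prop :=
  -- axiom (1)
  (∀ a b, Q.ul (Q.ur a b) (Q.lr b a) = a) ∧
  (∀ a b, Q.ll (Q.lr b a) (Q.ur a b) = b) ∧
  (∀ a b, Q.ur (Q.ul a b) (Q.ll b a) = a) ∧
  (∀ a b, Q.lr (Q.ll b a) (Q.ul a b) = b) ∧
  -- axiom (2)
  (∀ a b, ∃ x, x = Q.ur a (Q.ll b x) ∧ a = Q.ul x b ∧ b = Q.lr (Q.ll b x) a) ∧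
  (∀ a b, ∃ y, y = Q.ul a (Q.lr b y) ∧ a = Q.ur y b ∧ b = Q.ll (Q.lr b y) a) ∧
  -- axiom (3)
  (∀ a b c, Q.ur (Q.ur a b) c = Q.ur (Q.ur a (Q.lr c b)) (Q.ur b c)) ∧
  (∀ a b c, Q.lr (Q.lr c b) a = Q.lr (Q.lr c (Q.ur a b)) (Q.lr b a)) ∧
  (∀ a b c, Q.ur (Q.lr b a) (Q.lr c (Q.ur a b)) = Q.lr (Q.ur b c) (Q.ur a (Q.lr c b))) ∧
  (∀ a b c, Q.ul (Q.ul a b) c = Q.ul (Q.ul a (Q.ll c b)) (Q.ul b c)) ∧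
  (∀ a b c, Q.ll (Q.ll c b) a = Q.ll (Q.ll c (Q.ul a b)) (Q.ll b a)) ∧
  (∀ a b c, Q.ul (Q.ll b a) (Q.ll c (Q.ul a b)) = Q.ll (Q.ul b c) (Q.ul a (Q.ll c b))) ∧
  -- axiom (4)
  (∀ a, ∃ x, x = Q.lr a x ∧ a = Q.ur x a) ∧
  (∀ a, ∃ y, y = Q.ul a y ∧ a = Q.ll y a)

/-- The obverse: interchange right and left operations. -/
def Obv {B : Type*} (Q : BiquandleOps B) : BiquandleOps B :=
  ⟨Q.ul, Q.ur, Q.ll, Q.lr⟩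

/-- The flip: interchange upper and lower operations. -/
def Flip {B : Type*} (Q : BiquandleOps B) : BiquandleOps B :=
  ⟨Q.lr, Q.ll, Q.ur, Q.ul⟩

/-- A biquandle homomorphism: a map preserving all four operations. -/
def IsBiquandleHom {B T : Type*} (Q : BiquandleOps B) (R : BiquandleOps T)
    (φ : B → T) : Prop :=
  (∀ a b, φ (Q.ur a b) = R.ur (φ a) (φ b)) ∧
  (∀ a b, φ (Q.ul a b) = R.ul (φ a) (φ b)) ∧
  (∀ a b, φ (Q.lr a b) = R.lr (φ a) (φ b)) ∧
  (∀ a b, φ (Q.ll a b) = R.ll (φ a) (φ b))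

/-- The switch map `S(a,b) = (b_a, a^b)`. -/
def switchMap {B : Type*} (Q : BiquandleOps B) : B × B → B × B :=
  fun p => (Q.lr p.2 p.1, Q.ur p.1 p.2)

/-- The map `S̄(a,b) = (b^{ā}, a_{b̄})`. -/
def coswitchMap {B : Type*} (Q : BiquandleOps B) : B × B → B × B :=
  fun p => (Q.ul p.2 p.1, Q.ll p.1 p.2)

/-- Apply a map `B × B → B × B` to the first two coordinates of `B × B × B`. -/
def sTimesId {B : Type*} (S : B × B → B × B) : B × B × B → B × B × B :=
  fun p => ((S (p.1, p.2.1)).1, (S (p.1, p.2.1)).2, p.2.2)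

/-- Apply a map `B × B → B × B` to the last two coordinates of `B × B × B`. -/
def idTimesS {B : Type*} (S : B × B → B × B) : B × B × B → B × B × B :=
  fun p => (p.1, S p.2)

/-- The map `S̄(a,b) = (b^{ā}, a_{b̄})` of a biquandle satisfies the set-theoretic
Yang–Baxter equation. -/
theorem coswitch_yangBaxter {B : Type*} (Q : BiquandleOps B) (hQ : IsBiquandle Q) :
    (sTimesId (coswitchMap Q)) ∘ (idTimesS (coswitchMap Q)) ∘ (sTimesId (coswitchMap Q)) =
    (idTimesS (coswitchMap Q)) ∘ (sTimesId (coswitchMap Q)) ∘ (idTimesS (coswitchMap Q)) := by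
  obtain ⟨_, _, _, _, _, _, _, _, _, h10, h11, h12, _, _⟩ := hQ
  funext p
  obtain ⟨a, b, c⟩ := p
  simp only [Function.comp_apply, sTimesId, idTimesS, coswitchMap, Prod.mk.injEq]
  exact ⟨(h10 c b a).symm, (h12 c b a).symm, h11 c b a⟩
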